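/- For every continuous g : X → ℂ and every f ∈ C_c(U), the function α(g)·f defined by (α(g)·f)(x) = g(σ(x))·f(x) for x ∈ U and 0 for x ∉ U belongs to C_c(U), and L(α(g)·f) = g·L(f) as functions on X. -/

import Mathlib

/-- `σ : U → X` is a local homeomorphism. -/
def IsLocalHomeo {X : Type*} [TopologicalSpace X] (σ : X → X) (U : Set X) : Prop :=
  ∀ x ∈ U, ∃ W : Set X, x ∈ W ∧ W ⊆ U ∧ IsOpen W ∧ IsOpen (σ '' W) ∧
    Set.InjOn σ W ∧ ContinuousOn σ W ∧ ∀ V : Set X, V ⊆ W → IsOpen V → IsOpen (σ '' V)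

/-- `f` is a continuous function on `X` with compact support contained in `U`. -/
def MemCc {X : Type*} [TopologicalSpace X] (U : Set X) (f : X → ℂ) : Prop :=
  Continuous f ∧ IsCompact (tsupport f) ∧ tsupport f ⊆ U

/-- The transfer operator: `L f x = ∑_{y ∈ U, σ y = x} f y` (a finite sum for
`f ∈ C_c(U)`; the empty sum, in particular the case `σ⁻¹(x) = ∅`, gives `0`). -/
noncomputable def Lop {X : Type*} [TopologicalSpace X] (σ : X → X) (U : Set X)
    (f : X → ℂ) : X → ℂ :=
  fun x => ∑ᶠ y ∈ {y : X | y ∈ U ∧ σ y = x}, f y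

lemma mul_finsum_mem_local {X : Type*} (c : ℂ) (F : X → ℂ) (S : Set X) :
    ∑ᶠ y ∈ S, c * F y = c * ∑ᶠ y ∈ S, F y := by
  rw [finsum_mem_def, finsum_mem_def]
  rw [show (S.indicator fun y => c * F y) = fun y => c * S.indicator F y by
    ext y; by_cases h : y ∈ S <;> simp [h]]
  have := smul_finsum (M := ℂ) (R := ℂ) c (S.indicator F)
  simpa [smul_eq_mul] using this.symm

/-- For continuous `g : X → ℂ` and `f ∈ C_c(U)`, the function `α(g)·f`, given by
`x ↦ g (σ x) * f x` on `U` and `0` off `U`, belongs to `C_c(U)`, and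
`L (α(g)·f) = g · L f`. -/
theorem stmt_5 {X : Type*} [TopologicalSpace X] [CompactSpace X] [T2Space X]
    (U : Set X) (hU : IsOpen U) (σ : X → X) (hσ : IsLocalHomeo σ U)
    (g : X → ℂ) (hg : Continuous g) (f : X → ℂ) (hf : MemCc U f) :
    MemCc U (U.indicator fun x => g (σ x) * f x) ∧
    Lop σ U (U.indicator fun x => g (σ x) * f x) = fun x => g x * Lop σ U f x := by
  obtain ⟨hfc, hfcomp, hfsupp⟩ := hf
  set h : X → ℂ := U.indicator fun x => g (σ x) * f x with hh
  -- σ is continuous at every point of U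
  have hσcont : ∀ x ∈ U, ContinuousAt σ x := by
    intro x hx
    obtain ⟨W, hxW, hWU, hWopen, _, _, hWcont, _⟩ := hσ x hx
    exact hWcont.continuousAt (hWopen.mem_nhds hxW)
  -- h vanishes off the support of f
  have hzero : ∀ y, f y = 0 → h y = 0 := by
    intro y hy
    by_cases hyU : y ∈ U <;> simp [hh, Set.indicator_apply, hyU, hy]
  have hsupp : Function.support h ⊆ tsupport f := by
    intro y hy
    by_contra hmem
    exact hy (hzero y (image_eq_zero_of_notMem_tsupport hmem))
  have htsupp : tsupport h ⊆ tsupport f :=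
    closure_minimal hsupp isClosed_closure
  have hcont : Continuous h := by
    rw [continuous_iff_continuousAt]
    intro x
    by_cases hx : x ∈ U
    · have : ContinuousAt (fun y => g (σ y) * f y) x :=
        ((hg.continuousAt).comp (hσcont x hx)).mul hfc.continuousAt
      refine this.congr ?_
      filter_upwards [hU.mem_nhds hx] with y hy
      simp [hh, Set.indicator_of_mem hy]
    · have hx' : x ∉ tsupport f := fun hmem => hx (hfsupp hmem)
      have : ContinuousAt (fun _ : X => (0 : ℂ)) x := continuousAt_const
      refine this.congr ?_
      filter_upwards [(isClosed_tsupport f).isOpen_compl.mem_nhds hx'] with y hy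
      exact (hzero y (image_eq_zero_of_notMem_tsupport hy)).symm
  refine ⟨⟨hcont, hfcomp.of_isClosed_subset (isClosed_tsupport h) htsupp,
    htsupp.trans hfsupp⟩, ?_⟩
  funext x
  have : ∀ y ∈ {y : X | y ∈ U ∧ σ y = x}, h y = g x * f y := by
    rintro y ⟨hyU, hyσ⟩
    simp [hh, Set.indicator_of_mem hyU, hyσ]
  rw [Lop, finsum_mem_congr rfl this, mul_finsum_mem_local]
  rfl
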